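/- Fix a finite state space S, a finite action space A, a prior policy π₀ with π₀(a|s) > 0 for all (s,a), an inverse temperature β > 0, a policy π with π(a|s) > 0 for all (s,a), and a function Q : S × A → ℝ. Let V(s) = E_{a∼π(·|s)} [ Q(s,a) − β⁻¹ log(π(a|s)/π₀(a|s)) ] and let A(s,a) = Q(s,a) − V(s) be the advantage function. Then π is a fixed point of the Boltzmann improvement map, i.e. π(a|s) = π₀(a|s) e^{β Q(s,a)} / Σ_{b∈A} π₀(b|s) e^{β Q(s,b)} for all (s,a), if and only if β⁻¹ log( π(a|s) / π₀(a|s) ) = A(s,a) for all (s,a); that is, a fixed-point policy satisfies π(a|s) ∝ π₀(a|s) e^{β A(s,a)}. -/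

import Mathlib

/-- a policy π is a fixed point of the Boltzmann improvement map
iff its log-ratio to the prior equals the advantage function, i.e.
π(a|s) ∝ π₀(a|s) e^{β A(s,a)}. -/
theorem boltzmann_fixed_point_iff_advantage
    {S A : Type} [Fintype S] [Fintype A] [Nonempty A]
    (π₀ : S → A → ℝ)
    (hπ₀_pos : ∀ s a, 0 < π₀ s a)
    (hπ₀_sum : ∀ s, ∑ a, π₀ s a = 1)
    (β : ℝ) (hβ : 0 < β)
    (π : S → A → ℝ)
    (hπ_pos : ∀ s a, 0 < π s a)
    (hπ_sum : ∀ s, ∑ a, π s a = 1)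
    (Q : S → A → ℝ)
    (V : S → ℝ)
    (hV : ∀ s, V s = ∑ a, π s a * (Q s a - β⁻¹ * Real.log (π s a / π₀ s a)))
    (Adv : S → A → ℝ)
    (hAdv : ∀ s a, Adv s a = Q s a - V s) :
    (∀ s a, π s a =
        π₀ s a * Real.exp (β * Q s a) / ∑ b, π₀ s b * Real.exp (β * Q s b))
    ↔
    (∀ s a, β⁻¹ * Real.log (π s a / π₀ s a) = Adv s a) := by
  constructor
  · intro h s a
    have hZpos : (0:ℝ) < ∑ b, π₀ s b * Real.exp (β * Q s b) :=
      Finset.sum_pos (fun b _ => mul_pos (hπ₀_pos s b) (Real.exp_pos _))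
        Finset.univ_nonempty
    set Z := ∑ b, π₀ s b * Real.exp (β * Q s b) with hZ
    have hlog : ∀ b, Real.log (π s b / π₀ s b) = β * Q s b - Real.log Z := by
      intro b
      have hratio : π s b / π₀ s b = Real.exp (β * Q s b) / Z := by
        rw [h s b]
        field_simp [ne_of_gt (hπ₀_pos s b), ne_of_gt hZpos]
        rw [← hZ]; exact mul_inv_cancel₀ (ne_of_gt hZpos)
      rw [hratio, Real.log_div (Real.exp_ne_zero _) (ne_of_gt hZpos),
        Real.log_exp]
    have hVval : V s = β⁻¹ * Real.log Z := by
      rw [hV s]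
      have key : ∀ b, π s b * (Q s b - β⁻¹ * Real.log (π s b / π₀ s b))
          = π s b * (β⁻¹ * Real.log Z) := by
        intro b
        rw [hlog b]
        congr 1
        field_simp
        ring
      rw [Finset.sum_congr rfl (fun b _ => key b), ← Finset.sum_mul,
        hπ_sum s, one_mul]
    rw [hlog a, hAdv s a, hVval]
    field_simp
  · intro h s a
    have hZpos : (0:ℝ) < ∑ b, π₀ s b * Real.exp (β * Q s b) :=
      Finset.sum_pos (fun b _ => mul_pos (hπ₀_pos s b) (Real.exp_pos _))
        Finset.univ_nonempty
    have hpi : ∀ b, π s b = π₀ s b * Real.exp (β * Q s b) * Real.exp (-(β * V s)) := by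
      intro b
      have hlog : Real.log (π s b / π₀ s b) = β * (Q s b - V s) :=
        calc Real.log (π s b / π₀ s b)
            = β * (β⁻¹ * Real.log (π s b / π₀ s b)) := by field_simp
          _ = β * Adv s b := by rw [h s b]
          _ = β * (Q s b - V s) := by rw [hAdv]
      have hratio : π s b / π₀ s b = Real.exp (β * (Q s b - V s)) := by
        rw [← hlog, Real.exp_log (div_pos (hπ_pos s b) (hπ₀_pos s b))]
      have harg : β * Q s b + -(β * V s) = β * (Q s b - V s) := by ring
      rw [mul_assoc, ← Real.exp_add, harg, ← hratio]
      rw [mul_div_cancel₀ _ (ne_of_gt (hπ₀_pos s b))]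
    have hsum : (∑ b, π₀ s b * Real.exp (β * Q s b)) * Real.exp (-(β * V s)) = 1 := by
      rw [Finset.sum_mul, ← hπ_sum s]
      exact Finset.sum_congr rfl (fun b _ => (hpi b).symm)
    have hZeq : (∑ b, π₀ s b * Real.exp (β * Q s b)) = Real.exp (β * V s) := by
      rw [Real.exp_neg] at hsum
      field_simp at hsum
      linarith
    rw [hpi a, hZeq, Real.exp_neg]
    field_simp
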